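/- Let G be a finite group with a projective representation ω on a finite-dimensional Hilbert space such that no two distinct nontrivial group elements have commuting representatives (maximal noncommutativity), and G is abelian. Then every irreducible such projective representation has dimension √|G|, so the logical space carries log₂√|G| qubits when |G| is a power of 4. -/

import Mathlib

open Matrix

private lemma mul_std_mul_apply {n : ℕ} (A B : Matrix (Fin n) (Fin n) ℂ) (i j k l : Fin n) :
    (A * Matrix.single i j (1:ℂ) * B) k l = A k i * B j l := by
  rw [Matrix.mul_apply]
  rw [Finset.sum_eq_single j]
  · simp
  · intro b _ hb
    simp [hb]
  · simp

/-- a maximally noncommutative irreducible projective representation of a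
finite abelian group `G` has dimension `√|G|`; when `|G| = 4^k` the logical space
carries `k = log₂ √|G|` qubits. -/
theorem mnc_projective_rep_dim {G : Type*} [CommGroup G] [Fintype G] [DecidableEq G]
    (n : ℕ) (hn : 0 < n)
    (ω : G → G → ℂ) (V : G → Matrix (Fin n) (Fin n) ℂ)
    (hunit : ∀ g, V g ∈ Matrix.unitaryGroup (Fin n) ℂ)
    (hproj : ∀ g h, V g * V h = ω g h • V (g * h))
    (hMNC : ∀ g : G, g ≠ 1 → ∃ h : G, ω g h ≠ ω h g)
    (hirr : ∀ W : Submodule ℂ (Fin n → ℂ),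
      (∀ g, W.map (Matrix.toLin' (V g)) ≤ W) → W = ⊥ ∨ W = ⊤) :
    (n : ℝ) = Real.sqrt (Fintype.card G) ∧
      ∀ k : ℕ, Fintype.card G = 4 ^ k → n = 2 ^ k := by
  classical
  haveI : Nonempty (Fin n) := ⟨⟨0, hn⟩⟩
  have i0 : Fin n := ⟨0, hn⟩
  have hsl : ∀ g, star (V g) * V g = 1 := fun g => mem_unitaryGroup_iff'.mp (hunit g)
  have hsr : ∀ g, V g * star (V g) = 1 := fun g => mem_unitaryGroup_iff.mp (hunit g)
  have smul_one_inj : ∀ c d : ℂ, c • (1 : Matrix (Fin n) (Fin n) ℂ) = d • 1 → c = d := by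
    intro c d h
    have := congrFun (congrFun h i0) i0
    simpa using this
  -- |ω g h|² = 1
  have habs : ∀ g h, star (ω g h) * ω g h = 1 := by
    intro g h
    have h1 : (V g * V h) * star (V g * V h) = 1 := by
      rw [Matrix.star_mul]
      calc V g * V h * (star (V h) * star (V g))
          = V g * (V h * star (V h)) * star (V g) := by noncomm_ring
        _ = 1 := by rw [hsr, mul_one, hsr]
    rw [hproj g h, star_smul, smul_mul_assoc, mul_smul_comm, hsr, smul_smul] at h1
    have := smul_one_inj _ 1 (by simpa using h1)
    rw [mul_comm] at this
    exact this
  -- trace vanishing for g ≠ 1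
  have htr0 : ∀ g, g ≠ 1 → trace (V g) = 0 := by
    intro g hg
    obtain ⟨h, hne⟩ := hMNC g hg
    have e1 : ω g h • (V h * V g) = ω h g • (V g * V h) := by
      rw [hproj, hproj, smul_smul, smul_smul, mul_comm h g, mul_comm (ω g h) (ω h g)]
    have e2 : ω g h • (V h * V g * star (V h)) = ω h g • V g := by
      calc ω g h • (V h * V g * star (V h))
          = (ω g h • (V h * V g)) * star (V h) := by rw [smul_mul_assoc]
        _ = (ω h g • (V g * V h)) * star (V h) := by rw [e1]
        _ = ω h g • (V g * (V h * star (V h))) := by rw [smul_mul_assoc, mul_assoc]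
        _ = ω h g • V g := by rw [hsr, mul_one]
    have e3 : trace (V h * V g * star (V h)) = trace (V g) := by
      rw [trace_mul_cycle, hsl, one_mul]
    have e4 : ω g h * trace (V g) = ω h g * trace (V g) := by
      have := congrArg trace e2
      rw [trace_smul, trace_smul, e3] at this
      simpa using this
    have e5 : (ω g h - ω h g) * trace (V g) = 0 := by linear_combination e4
    rcases mul_eq_zero.mp e5 with h0 | h0
    · exact absurd (sub_eq_zero.mp h0) hne
    · exact h0
  -- V 1 is scalar
  have hV1 : V 1 = ω 1 1 • 1 := by
    calc V 1 = V 1 * (V 1 * star (V 1)) := by rw [hsr, mul_one]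
      _ = (V 1 * V 1) * star (V 1) := by rw [mul_assoc]
      _ = (ω 1 1 • V (1 * 1)) * star (V 1) := by rw [hproj]
      _ = ω 1 1 • (V 1 * star (V 1)) := by rw [one_mul, smul_mul_assoc]
      _ = ω 1 1 • 1 := by rw [hsr]
  -- Schur's lemma
  have schur : ∀ T : Matrix (Fin n) (Fin n) ℂ, (∀ h, V h * T = T * V h) →
      ∃ c : ℂ, T = c • 1 := by
    intro T hT
    obtain ⟨c, hc⟩ := Module.End.exists_eigenvalue (Matrix.toLin' T)
    refine ⟨c, ?_⟩
    set W := Module.End.eigenspace (Matrix.toLin' T) c with hWdef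
    have hW : ∀ g, W.map (Matrix.toLin' (V g)) ≤ W := by
      intro g x hx
      obtain ⟨y, hy, rfl⟩ := Submodule.mem_map.mp hx
      have hy' : Matrix.toLin' T y = c • y := Module.End.mem_eigenspace_iff.mp hy
      refine Module.End.mem_eigenspace_iff.mpr ?_
      have : Matrix.toLin' T (Matrix.toLin' (V g) y)
          = Matrix.toLin' (V g) (Matrix.toLin' T y) := by
        rw [← Matrix.toLin'_mul_apply, ← hT g, Matrix.toLin'_mul_apply]
      rw [this, hy', _root_.map_smul]
    rcases hirr W hW with hbot | htop
    · exact absurd hbot hc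
    · apply Matrix.toLin'.injective
      apply LinearMap.ext
      intro x
      have hx : x ∈ W := htop ▸ Submodule.mem_top
      have hx' : Matrix.toLin' T x = c • x := Module.End.mem_eigenspace_iff.mp hx
      rw [hx', _root_.map_smul, Matrix.toLin'_one]
      rfl
  -- the averaged operators
  set T : Fin n → Fin n → Matrix (Fin n) (Fin n) ℂ :=
    fun i j => ∑ g, V g * Matrix.single i j (1:ℂ) * star (V g) with hTdef
  have hTcomm : ∀ i j h, V h * T i j = T i j * V h := by
    intro i j h
    have key : ∀ g, V h * (V g * Matrix.single i j (1:ℂ) * star (V g)) * star (V h)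
        = V (h * g) * Matrix.single i j (1:ℂ) * star (V (h * g)) := by
      intro g
      have e1 : V h * (V g * Matrix.single i j (1:ℂ) * star (V g)) * star (V h)
          = (V h * V g) * Matrix.single i j (1:ℂ) * star (V h * V g) := by
        rw [Matrix.star_mul]
        noncomm_ring
      rw [e1, hproj h g, star_smul, smul_mul_assoc, smul_mul_assoc, mul_smul_comm,
        smul_smul, mul_comm (ω h g), habs, one_smul]
    have h1 : V h * T i j * star (V h) = T i j := by
      show V h * (∑ g, V g * Matrix.single i j (1:ℂ) * star (V g)) * star (V h)
          = ∑ g, V g * Matrix.single i j (1:ℂ) * star (V g)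
      rw [Finset.mul_sum, Finset.sum_mul]
      calc (∑ g, V h * (V g * Matrix.single i j (1:ℂ) * star (V g)) * star (V h))
          = ∑ g, V (h * g) * Matrix.single i j (1:ℂ) * star (V (h * g)) :=
            Finset.sum_congr rfl fun g _ => key g
        _ = ∑ g, V g * Matrix.single i j (1:ℂ) * star (V g) :=
            Fintype.sum_equiv (Equiv.mulLeft h) _ _ (fun g => rfl)
    calc V h * T i j = V h * T i j * (star (V h) * V h) := by rw [hsl, mul_one]
      _ = (V h * T i j * star (V h)) * V h := by rw [← mul_assoc]
      _ = T i j * V h := by rw [h1]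
  have hTscalar : ∀ i j, ∃ c : ℂ, T i j = c • 1 := fun i j => schur _ (hTcomm i j)
  -- trace of T i i
  have hTtrace : ∀ i : Fin n, trace (T i i) = (Fintype.card G : ℂ) := by
    intro i
    show trace (∑ g, V g * Matrix.single i i (1:ℂ) * star (V g)) = _
    rw [trace_sum]
    have : ∀ g : G, trace (V g * Matrix.single i i (1:ℂ) * star (V g)) = 1 := by
      intro g
      rw [trace_mul_cycle, hsl, one_mul, trace_single_eq_same]
    rw [Finset.sum_congr rfl fun g _ => this g]
    simp
  -- entry expansion
  have expand : ∀ i j : Fin n, (T i j) i j = ∑ g, V g i i * star (V g j j) := by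
    intro i j
    show (∑ g, V g * Matrix.single i j (1:ℂ) * star (V g)) i j = _
    rw [Matrix.sum_apply]
    refine Finset.sum_congr rfl fun g _ => ?_
    rw [mul_std_mul_apply]
    rfl
  -- the double sum, way A
  have wayA : (∑ i, ∑ j, (T i j) i j) = (n : ℂ) * n := by
    calc (∑ i, ∑ j, (T i j) i j)
        = ∑ i, ∑ j, ∑ g, V g i i * star (V g j j) :=
          Finset.sum_congr rfl fun i _ => Finset.sum_congr rfl fun j _ => expand i j
      _ = ∑ i, ∑ g : G, ∑ j, V g i i * star (V g j j) :=
          Finset.sum_congr rfl fun i _ => Finset.sum_comm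
      _ = ∑ g : G, ∑ i, ∑ j, V g i i * star (V g j j) := Finset.sum_comm
      _ = ∑ g : G, trace (V g) * star (trace (V g)) := by
          refine Finset.sum_congr rfl fun g _ => ?_
          simp only [Matrix.trace, Matrix.diag_apply]
          rw [star_sum, Finset.sum_mul_sum]
      _ = trace (V 1) * star (trace (V 1)) := by
          refine Finset.sum_eq_single 1 (fun g _ hg => ?_) (by simp)
          rw [htr0 g hg, zero_mul]
      _ = (n : ℂ) * n := by
          rw [hV1, trace_smul, trace_one]
          simp only [smul_eq_mul, Fintype.card_fin, star_mul', star_natCast]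
          linear_combination (n:ℂ) * (n:ℂ) * habs 1 1
  -- way B
  have diagzero : ∀ i j : Fin n, i ≠ j → (T i j) i j = 0 := by
    intro i j hij
    obtain ⟨c, hc⟩ := hTscalar i j
    rw [hc]
    simp [Matrix.one_apply_ne hij]
  have diagval : ∀ i : Fin n, (n:ℂ) * (T i i) i i = (Fintype.card G : ℂ) := by
    intro i
    obtain ⟨c, hc⟩ := hTscalar i i
    have h1 : trace (T i i) = (n:ℂ) * c := by
      rw [hc, trace_smul, trace_one]
      simp [Fintype.card_fin, mul_comm]
    have h2 : (T i i) i i = c := by rw [hc]; simp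
    rw [h2, ← hTtrace i, h1]
  have wayB : (n:ℂ) * (∑ i, ∑ j, (T i j) i j) = (n:ℂ) * (Fintype.card G : ℂ) := by
    have h1 : ∀ i : Fin n, (∑ j, (T i j) i j) = (T i i) i i := fun i =>
      Finset.sum_eq_single i (fun j _ hj => diagzero i j (Ne.symm hj)) (by simp)
    calc (n:ℂ) * (∑ i, ∑ j, (T i j) i j)
        = (n:ℂ) * ∑ i, (T i i) i i := by rw [Finset.sum_congr rfl fun i _ => h1 i]
      _ = ∑ i : Fin n, (n:ℂ) * (T i i) i i := by rw [Finset.mul_sum]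
      _ = ∑ _i : Fin n, (Fintype.card G : ℂ) := Finset.sum_congr rfl fun i _ => diagval i
      _ = (n:ℂ) * (Fintype.card G : ℂ) := by
          rw [Finset.sum_const]
          simp [nsmul_eq_mul]
  have hccard : (n:ℂ) * (n:ℂ) = (Fintype.card G : ℂ) := by
    rw [wayA] at wayB
    exact mul_left_cancel₀ (Nat.cast_ne_zero.mpr hn.ne') wayB
  have hcard : Fintype.card G = n * n := by exact_mod_cast hccard.symm
  constructor
  · rw [hcard]
    push_cast
    rw [show ((n:ℝ) * n) = (n:ℝ)^2 by ring]
    exact (Real.sqrt_sq (by positivity)).symm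
  · intro k hk
    have h4 : n * n = 2^k * 2^k := by
      rw [← hcard, hk, show (4:ℕ) = 2*2 by norm_num, mul_pow]
    have h5 : n^2 = (2^k)^2 := by rw [pow_two, pow_two, h4]
    exact Nat.pow_left_injective (by norm_num) h5
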